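/- Simple pole and residue of the resolvent of a rank-one operator: Let E be a complex Banach space, a ∈ E, b a continuous linear functional on E with b(a) ≠ 0, and S := a⊗b. Then, as λ → b(a) with λ ≠ b(a), the operators (λ - b(a)) • (λ•I - S)⁻¹ converge in operator norm to b(a)⁻¹ • (a⊗b); in particular, if b(a) = 1 the limit is the rank-one projection a⊗b. (Here (λ•I - S)⁻¹ is the inverse of λ•I - S, which exists for all λ in a punctured neighborhood of b(a).) -/

import Mathlib

open Topology Filter

lemma rank_one_sq {E : Type*} [NormedAddCommGroup E] [NormedSpace ℂ E]
    (a : E) (b : E →L[ℂ] ℂ) :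
    (b.smulRight a) * (b.smulRight a) = b a • b.smulRight a := by
  ext f
  simp [ContinuousLinearMap.smulRight_apply, smul_smul, mul_comm]

lemma rank_one_resolvent_mul {E : Type*} [NormedAddCommGroup E] [NormedSpace ℂ E]
    (a : E) (b : E →L[ℂ] ℂ) {lam : ℂ} (h0 : lam ≠ 0) (h1 : lam ≠ b a) :
    (lam • (1 : E →L[ℂ] E) - b.smulRight a) *
      (lam⁻¹ • (1 : E →L[ℂ] E) + (lam⁻¹ * (lam - b a)⁻¹) • b.smulRight a) = 1 := by
  have hsub : lam - b a ≠ 0 := sub_ne_zero.mpr h1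
  set S := b.smulRight a with hSdef
  have hS := rank_one_sq a b
  have expand : (lam • (1 : E →L[ℂ] E) - S) * (lam⁻¹ • 1 + (lam⁻¹ * (lam - b a)⁻¹) • S) =
      (lam * lam⁻¹) • 1 +
        (lam * (lam⁻¹ * (lam - b a)⁻¹) - (lam⁻¹ + lam⁻¹ * (lam - b a)⁻¹ * b a)) • S := by
    simp only [sub_mul, mul_add, smul_mul_smul_comm, mul_smul_comm, smul_mul_assoc,
      ← hSdef, hS, smul_smul, one_mul, mul_one]
    simp only [hSdef, hS]
    module
  rw [expand, mul_inv_cancel₀ h0, one_smul]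
  have hc : lam * (lam⁻¹ * (lam - b a)⁻¹) - (lam⁻¹ + lam⁻¹ * (lam - b a)⁻¹ * b a) = 0 := by
    field_simp
    ring
  rw [hc, zero_smul, add_zero]

lemma rank_one_resolvent_mul' {E : Type*} [NormedAddCommGroup E] [NormedSpace ℂ E]
    (a : E) (b : E →L[ℂ] ℂ) {lam : ℂ} (h0 : lam ≠ 0) (h1 : lam ≠ b a) :
    (lam⁻¹ • (1 : E →L[ℂ] E) + (lam⁻¹ * (lam - b a)⁻¹) • b.smulRight a) *
      (lam • (1 : E →L[ℂ] E) - b.smulRight a) = 1 := by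
  have hsub : lam - b a ≠ 0 := sub_ne_zero.mpr h1
  set S := b.smulRight a with hSdef
  have hS := rank_one_sq a b
  have expand : (lam⁻¹ • (1 : E →L[ℂ] E) + (lam⁻¹ * (lam - b a)⁻¹) • S) *
      (lam • 1 - S) =
      (lam⁻¹ * lam) • 1 +
        (lam⁻¹ * (lam - b a)⁻¹ * lam - (lam⁻¹ + lam⁻¹ * (lam - b a)⁻¹ * b a)) • S := by
    simp only [mul_sub, add_mul, smul_mul_smul_comm, mul_smul_comm, smul_mul_assoc,
      ← hSdef, hS, smul_smul, one_mul, mul_one]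
    simp only [hSdef, hS]
    module
  rw [expand, inv_mul_cancel₀ h0, one_smul]
  have hc : lam⁻¹ * (lam - b a)⁻¹ * lam - (lam⁻¹ + lam⁻¹ * (lam - b a)⁻¹ * b a) = 0 := by
    field_simp
    ring
  rw [hc, zero_smul, add_zero]

/-- The unit corresponding to `λ•1 - a⊗b`. -/
noncomputable def rankOneResolventUnit {E : Type*} [NormedAddCommGroup E] [NormedSpace ℂ E]
    (a : E) (b : E →L[ℂ] ℂ) {lam : ℂ} (h0 : lam ≠ 0) (h1 : lam ≠ b a) :
    (E →L[ℂ] E)ˣ where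
  val := lam • (1 : E →L[ℂ] E) - b.smulRight a
  inv := lam⁻¹ • (1 : E →L[ℂ] E) + (lam⁻¹ * (lam - b a)⁻¹) • b.smulRight a
  val_inv := rank_one_resolvent_mul a b h0 h1
  inv_val := rank_one_resolvent_mul' a b h0 h1

theorem residue_rank_one_resolvent
    {E : Type*} [NormedAddCommGroup E] [NormedSpace ℂ E] [CompleteSpace E]
    (a : E) (b : E →L[ℂ] ℂ) (hba : b a ≠ 0) :
    (∀ᶠ lam in 𝓝[≠] (b a), IsUnit (lam • (1 : E →L[ℂ] E) - b.smulRight a)) ∧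
    Tendsto (fun lam : ℂ =>
        (lam - b a) • Ring.inverse (lam • (1 : E →L[ℂ] E) - b.smulRight a))
      (𝓝[≠] (b a)) (𝓝 ((b a)⁻¹ • b.smulRight a)) := by
  have hne : ∀ᶠ lam in 𝓝[≠] (b a), lam ≠ b a := self_mem_nhdsWithin
  have h0 : ∀ᶠ lam in 𝓝[≠] (b a), lam ≠ 0 :=
    (eventually_ne_nhds hba).filter_mono nhdsWithin_le_nhds
  have hunit : ∀ᶠ lam in 𝓝[≠] (b a), IsUnit (lam • (1 : E →L[ℂ] E) - b.smulRight a) := by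
    filter_upwards [hne, h0] with lam h1 h0'
    exact ⟨rankOneResolventUnit a b h0' h1, rfl⟩
  refine ⟨hunit, ?_⟩
  have heq : (fun lam : ℂ =>
        (lam - b a) • Ring.inverse (lam • (1 : E →L[ℂ] E) - b.smulRight a)) =ᶠ[𝓝[≠] (b a)]
      fun lam => ((lam - b a) * lam⁻¹) • (1 : E →L[ℂ] E) + lam⁻¹ • b.smulRight a := by
    filter_upwards [hne, h0] with lam h1 h0'
    have hsub : lam - b a ≠ 0 := sub_ne_zero.mpr h1
    have : Ring.inverse (lam • (1 : E →L[ℂ] E) - b.smulRight a) =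
        lam⁻¹ • (1 : E →L[ℂ] E) + (lam⁻¹ * (lam - b a)⁻¹) • b.smulRight a := by
      have := Ring.inverse_unit (rankOneResolventUnit a b h0' h1)
      simpa [rankOneResolventUnit] using this
    rw [this, smul_add, smul_smul, smul_smul]
    congr 2
    field_simp
  rw [Filter.tendsto_congr' heq]
  have hlim : Tendsto (fun lam : ℂ =>
      ((lam - b a) * lam⁻¹) • (1 : E →L[ℂ] E) + lam⁻¹ • b.smulRight a)
      (𝓝[≠] (b a)) (𝓝 (((b a - b a) * (b a)⁻¹) • (1 : E →L[ℂ] E) + (b a)⁻¹ • b.smulRight a)) := by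
    apply Tendsto.mono_left _ nhdsWithin_le_nhds
    exact (((continuous_id.sub continuous_const).tendsto _).mul
        (tendsto_inv₀ hba)).smul_const _ |>.add ((tendsto_inv₀ hba).smul_const _)
  simpa using hlim
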